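/- (Projected subgradient descent.) Let Θ ⊆ ℝ^n be compact convex and f₁,…,f_T : Θ → ℝ convex. Let B_Θ ≥ max_{θ∈Θ} ‖θ‖₂ and suppose ǧ_t ∈ ∂f_t(θ^(t)) with ‖ǧ_t‖₂ ≤ B_ǧ for all t. Starting from θ^(1) = argmin_{θ∈Θ} ‖θ‖₂ and using step size η := B_Θ/(B_ǧ √(2T)), perform T iterations of θ^(t+1) = Π_Θ(θ^(t) − η ǧ_t), where Π_Θ is the Euclidean projection onto Θ. Then for every θ* ∈ Θ: (1/T) Σ_{t=1}^T f_t(θ^(t)) − (1/T) Σ_{t=1}^T f_t(θ*) ≤ B_Θ B_ǧ √(2/T). -/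

import Mathlib

open RealInnerProductSpace

/-- The Euclidean norm of a vector in `Fin k → ℝ`. -/
noncomputable def euclNorm {k : ℕ} (x : Fin k → ℝ) : ℝ := Real.sqrt (∑ i, x i ^ 2)

/-- Reinterpret a vector as an element of Euclidean space. -/
noncomputable def toE {k : ℕ} (x : Fin k → ℝ) : EuclideanSpace ℝ (Fin k) := WithLp.toLp 2 x

lemma euclNorm_eq {k : ℕ} (x : Fin k → ℝ) : euclNorm x = ‖toE x‖ := by
  rw [EuclideanSpace.norm_eq, euclNorm]
  simp only [Real.norm_eq_abs, sq_abs]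
  rfl

lemma toE_sub {k : ℕ} (x y : Fin k → ℝ) : toE (x - y) = toE x - toE y := rfl
lemma toE_smul {k : ℕ} (c : ℝ) (x : Fin k → ℝ) : toE (c • x) = c • toE x := rfl
lemma toE_zero {k : ℕ} : toE (0 : Fin k → ℝ) = 0 := rfl

lemma inner_toE {k : ℕ} (x y : Fin k → ℝ) : ⟪toE x, toE y⟫ = ∑ i, x i * y i := by
  simp [PiLp.inner_apply, RCLike.inner_apply, toE, mul_comm]

lemma euclNorm_nonneg {k : ℕ} (x : Fin k → ℝ) : 0 ≤ euclNorm x := Real.sqrt_nonneg _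

lemma eq_zero_of_euclNorm_nonpos {k : ℕ} {x : Fin k → ℝ} (h : euclNorm x ≤ 0) : x = 0 := by
  have h0 : euclNorm x = 0 := le_antisymm h (euclNorm_nonneg x)
  rw [euclNorm, show (0:ℝ) = ‖(0 : EuclideanSpace ℝ (Fin k))‖ by simp] at h0
  have hs : ∑ i, x i ^ 2 ≤ 0 :=
    (Real.sqrt_eq_zero').mp (by simpa using h0)
  have hnn : (0:ℝ) ≤ ∑ i, x i ^ 2 := Finset.sum_nonneg fun i _ => sq_nonneg _
  have hz : ∑ i, x i ^ 2 = 0 := le_antisymm hs hnn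
  funext i
  have := (Finset.sum_eq_zero_iff_of_nonneg (fun i _ => sq_nonneg (x i))).mp hz i (Finset.mem_univ i)
  exact pow_eq_zero_iff (by norm_num) |>.mp this

lemma proj_ineq {F : Type*} [NormedAddCommGroup F] [InnerProductSpace ℝ F] {K : Set F}
    (hK : Convex ℝ K) {z v : F} (hv : v ∈ K) (hmin : ∀ w ∈ K, ‖v - z‖ ≤ ‖w - z‖)
    {w : F} (hw : w ∈ K) : ‖v - w‖ ≤ ‖z - w‖ := by
  have hne : Nonempty K := ⟨⟨v, hv⟩⟩
  have hiInf : ‖z - v‖ = ⨅ w : K, ‖z - ↑w‖ := by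
    apply le_antisymm
    · refine le_ciInf fun w' => ?_
      rw [norm_sub_rev z v, norm_sub_rev z (w' : F)]
      exact hmin w' w'.2
    · have hbdd : BddBelow (Set.range fun w : K => ‖z - (w : F)‖) :=
        ⟨0, by rintro x ⟨w', rfl⟩; exact norm_nonneg _⟩
      exact ciInf_le hbdd ⟨v, hv⟩
  have h0 : ⟪z - v, w - v⟫ ≤ 0 := (norm_eq_iInf_iff_real_inner_le_zero hK hv).mp hiInf w hw
  have hsq : ‖z - w‖ ^ 2 = ‖z - v‖ ^ 2 - 2 * ⟪z - v, w - v⟫ + ‖w - v‖ ^ 2 := by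
    have h := norm_sub_sq_real (z - v) (w - v)
    have he : (z - v) - (w - v) = z - w := by abel
    rwa [he] at h
  have h2 : ‖v - w‖ ^ 2 ≤ ‖z - w‖ ^ 2 := by
    rw [norm_sub_rev v w]
    nlinarith [sq_nonneg ‖z - v‖]
  have := Real.sqrt_le_sqrt h2
  rwa [Real.sqrt_sq (norm_nonneg _), Real.sqrt_sq (norm_nonneg _)] at this

lemma proj_ineqE {k : ℕ} {K : Set (Fin k → ℝ)} (hK : Convex ℝ K)
    {z : EuclideanSpace ℝ (Fin k)} {v : Fin k → ℝ} (hv : v ∈ K)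
    (hmin : ∀ w ∈ K, ‖toE v - z‖ ≤ ‖toE w - z‖) {w : Fin k → ℝ} (hw : w ∈ K) :
    ‖toE v - toE w‖ ≤ ‖z - toE w‖ := by
  have hK' : Convex ℝ (WithLp.ofLp ⁻¹' K : Set (EuclideanSpace ℝ (Fin k))) :=
    hK.linear_preimage (WithLp.linearEquiv 2 ℝ (Fin k → ℝ)).toLinearMap
  refine proj_ineq hK' (v := toE v) hv ?_ (w := toE w) hw
  intro w' hw'
  have := hmin _ hw'
  simpa [toE] using this

theorem projected_subgradient_descent
    {n : ℕ} (Θ : Set (Fin n → ℝ)) (hΘcomp : IsCompact Θ) (hΘconv : Convex ℝ Θ)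
    (f : ℕ → (Fin n → ℝ) → ℝ) (hf : ∀ t, ConvexOn ℝ Θ (f t))
    (BΘ Bg : ℝ) (hBΘ : ∀ θ ∈ Θ, euclNorm θ ≤ BΘ)
    (T : ℕ) (hT : 0 < T)
    (η : ℝ) (hη : η = BΘ / (Bg * Real.sqrt (2 * T)))
    (θs : ℕ → Fin n → ℝ) (gs : ℕ → Fin n → ℝ)
    -- `θ^(1)` is the minimum-norm point of `Θ`
    (hinit : θs 0 ∈ Θ ∧ ∀ y ∈ Θ, euclNorm (θs 0) ≤ euclNorm y)
    -- `ǧ_t` is a subgradient of `f_t` at `θ^(t)`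
    (hsubgrad : ∀ t < T, ∀ y ∈ Θ, f t (θs t) + ∑ i, gs t i * (y i - θs t i) ≤ f t y)
    (hgb : ∀ t < T, euclNorm (gs t) ≤ Bg)
    -- `θ^(t+1)` is the Euclidean projection of `θ^(t) − η ǧ_t` onto `Θ`
    (hproj : ∀ t < T, θs (t + 1) ∈ Θ ∧
      ∀ y ∈ Θ, euclNorm (θs (t + 1) - (θs t - η • gs t))
        ≤ euclNorm (y - (θs t - η • gs t))) :
    ∀ θ' ∈ Θ,
      (1 / (T : ℝ)) * ∑ t ∈ Finset.range T, f t (θs t)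
        - (1 / (T : ℝ)) * ∑ t ∈ Finset.range T, f t θ'
      ≤ BΘ * Bg * Real.sqrt (2 / T) := by
  intro θ' hθ'
  have hθ0 : θs 0 ∈ Θ := hinit.1
  have hBΘ0 : 0 ≤ BΘ := le_trans (euclNorm_nonneg _) (hBΘ _ hθ0)
  have hBg0 : 0 ≤ Bg := le_trans (euclNorm_nonneg _) (hgb 0 hT)
  have hTpos : (0:ℝ) < T := by exact_mod_cast hT
  have hmem : ∀ t, t ≤ T → θs t ∈ Θ := by
    intro t
    induction t with
    | zero => intro _; exact hθ0
    | succ k _ => intro hk; exact (hproj k (Nat.lt_of_succ_le hk)).1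
  -- degenerate case Bg = 0
  rcases eq_or_lt_of_le hBg0 with hBgz | hBgpos
  · have hle : ∀ t ∈ Finset.range T, f t (θs t) ≤ f t θ' := by
      intro t ht
      rw [Finset.mem_range] at ht
      have hg0 : gs t = 0 := by
        have h := hgb t ht
        rw [← hBgz] at h
        exact eq_zero_of_euclNorm_nonpos h
      have := hsubgrad t ht θ' hθ'
      simp [hg0] at this
      exact this
    have hsum : ∑ t ∈ Finset.range T, f t (θs t) ≤ ∑ t ∈ Finset.range T, f t θ' :=
      Finset.sum_le_sum hle
    have h1 : (1/(T:ℝ)) * ∑ t ∈ Finset.range T, f t (θs t)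
        ≤ (1/(T:ℝ)) * ∑ t ∈ Finset.range T, f t θ' :=
      mul_le_mul_of_nonneg_left hsum (by positivity)
    rw [← hBgz]
    simp only [mul_zero, zero_mul]
    linarith
  -- degenerate case BΘ = 0
  rcases eq_or_lt_of_le hBΘ0 with hBΘz | hBΘpos
  · have hzero : ∀ θ ∈ Θ, θ = (0 : Fin n → ℝ) := by
      intro θ hθ
      exact eq_zero_of_euclNorm_nonpos (by rw [← hBΘz] at hBΘ; exact hBΘ θ hθ)
    have hsum : ∑ t ∈ Finset.range T, f t (θs t) = ∑ t ∈ Finset.range T, f t θ' := by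
      refine Finset.sum_congr rfl fun t ht => ?_
      rw [Finset.mem_range] at ht
      rw [hzero (θs t) (hmem t ht.le), hzero θ' hθ']
    rw [← hBΘz, hsum]
    simp
  -- main case
  set s := Real.sqrt (2 * T) with hs_def
  have hs2 : s ^ 2 = 2 * T := Real.sq_sqrt (by positivity)
  have hspos : 0 < s := Real.sqrt_pos.mpr (by positivity)
  have hηpos : 0 < η := by rw [hη]; exact div_pos hBΘpos (mul_pos hBgpos hspos)
  set D : ℕ → ℝ := fun t => ‖toE (θs t) - toE θ'‖ ^ 2 with hD_def
  -- key per-step inequality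
  have key : ∀ t < T, f t (θs t) - f t θ'
      ≤ (D t - D (t + 1)) / (2 * η) + η * Bg ^ 2 / 2 := by
    intro t ht
    have hu : θs t ∈ Θ := hmem t ht.le
    set u := toE (θs t) with hu_def
    set g := toE (gs t) with hg_def
    set w := toE θ' with hw_def
    -- subgradient inequality in inner-product form
    have hiprel : (∑ i, gs t i * (θ' i - θs t i)) = - ⟪g, u - w⟫ := by
      rw [hg_def, hu_def, hw_def, ← toE_sub, inner_toE, ← Finset.sum_neg_distrib]
      exact Finset.sum_congr rfl fun i _ => by simp only [Pi.sub_apply]; ring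
    have hsub : f t (θs t) - f t θ' ≤ ⟪g, u - w⟫ := by
      have h := hsubgrad t ht θ' hθ'
      rw [hiprel] at h
      linarith
    -- projection step
    have hp := hproj t ht
    have hDle : ‖toE (θs (t+1)) - w‖ ≤ ‖(u - η • g) - w‖ := by
      refine proj_ineqE hΘconv hp.1 ?_ hθ'
      intro y hy
      have h2 := hp.2 y hy
      rw [euclNorm_eq, euclNorm_eq] at h2
      simp only [toE_sub, toE_smul] at h2
      exact h2
    have hDsq : D (t+1) ≤ ‖(u - η • g) - w‖ ^ 2 := by
      have := pow_le_pow_left₀ (norm_nonneg _) hDle 2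
      simpa [hD_def] using this
    have hexp : ‖(u - η • g) - w‖ ^ 2 = D t - 2 * η * ⟪g, u - w⟫ + η ^ 2 * ‖g‖ ^ 2 := by
      have h1 : (u - η • g) - w = (u - w) - η • g := by abel
      rw [h1, norm_sub_sq_real, real_inner_smul_right, real_inner_comm, norm_smul]
      simp only [Real.norm_eq_abs, mul_pow, sq_abs, hD_def]
      ring
    have hg2 : ‖g‖ ^ 2 ≤ Bg ^ 2 := by
      have := hgb t ht
      rw [euclNorm_eq] at this
      exact pow_le_pow_left₀ (norm_nonneg _) this 2
    have hform : (D t - D (t + 1)) / (2 * η) + η * Bg ^ 2 / 2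
        = (D t - D (t + 1) + η ^ 2 * Bg ^ 2) / (2 * η) := by
      field_simp
    rw [hform, le_div_iff₀ (by positivity)]
    nlinarith [mul_le_mul_of_nonneg_right hsub (le_of_lt (by positivity : (0:ℝ) < 2 * η)),
      mul_le_mul_of_nonneg_left hg2 (sq_nonneg η)]
  -- sum and telescope
  have hsum : ∑ t ∈ Finset.range T, (f t (θs t) - f t θ')
      ≤ (D 0 - D T) / (2 * η) + T * (η * Bg ^ 2 / 2) := by
    calc ∑ t ∈ Finset.range T, (f t (θs t) - f t θ')
        ≤ ∑ t ∈ Finset.range T, ((D t - D (t + 1)) / (2 * η) + η * Bg ^ 2 / 2) :=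
          Finset.sum_le_sum fun t ht => key t (Finset.mem_range.mp ht)
      _ = (∑ t ∈ Finset.range T, (D t - D (t + 1))) / (2 * η) + T * (η * Bg ^ 2 / 2) := by
          rw [Finset.sum_add_distrib, ← Finset.sum_div, Finset.sum_const, Finset.card_range]
          ring
      _ = (D 0 - D T) / (2 * η) + T * (η * Bg ^ 2 / 2) := by
          rw [Finset.sum_range_sub' D T]
  -- bound on D 0
  have hD0 : D 0 ≤ BΘ ^ 2 := by
    have hmin0 : ∀ w ∈ Θ, ‖toE (θs 0) - (0 : EuclideanSpace ℝ (Fin n))‖ ≤ ‖toE w - 0‖ := by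
      intro w hw
      rw [sub_zero, sub_zero, ← euclNorm_eq, ← euclNorm_eq]
      exact hinit.2 w hw
    have h := proj_ineqE
      hΘconv hθ0 hmin0 hθ'
    rw [zero_sub] at h
    have h2 : ‖toE (θs 0) - toE θ'‖ ≤ BΘ := by
      calc ‖toE (θs 0) - toE θ'‖ ≤ ‖-(toE θ')‖ := h
        _ = euclNorm θ' := by rw [norm_neg, euclNorm_eq]
        _ ≤ BΘ := hBΘ θ' hθ'
    calc D 0 = ‖toE (θs 0) - toE θ'‖ ^ 2 := rfl
      _ ≤ BΘ ^ 2 := pow_le_pow_left₀ (norm_nonneg _) h2 2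
  have hDT : 0 ≤ D T := sq_nonneg _
  have htot : ∑ t ∈ Finset.range T, (f t (θs t) - f t θ')
      ≤ BΘ ^ 2 / (2 * η) + T * (η * Bg ^ 2 / 2) := by
    have h1 : (D 0 - D T) / (2 * η) ≤ BΘ ^ 2 / (2 * η) := by
      gcongr
      linarith
    linarith [hsum]
  have hT2 : (T:ℝ) = s ^ 2 / 2 := by linarith
  have e1 : BΘ ^ 2 / (2 * η) = BΘ * Bg * s / 2 := by
    rw [hη]; field_simp
  have e2 : (T:ℝ) * (η * Bg ^ 2 / 2) = BΘ * Bg * s / 4 := by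
    rw [hη, hT2]; field_simp; ring
  have hgoal_sum : ∑ t ∈ Finset.range T, (f t (θs t) - f t θ')
      ≤ BΘ * Bg * s / 2 + BΘ * Bg * s / 4 := by
    rw [← e1, ← e2]; exact htot
  have hsqrt : Real.sqrt (2 / (T:ℝ)) = s / T := by
    rw [hs_def, show (2:ℝ) * (T:ℝ) = (2 / (T:ℝ)) * (T:ℝ) ^ 2 by field_simp,
      Real.sqrt_mul (by positivity) , Real.sqrt_sq hTpos.le,
      mul_div_assoc, div_self (ne_of_gt hTpos), mul_one]
  rw [hsqrt]
  have hfin : (1 / (T:ℝ)) * ∑ t ∈ Finset.range T, f t (θs t)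
      - (1 / (T:ℝ)) * ∑ t ∈ Finset.range T, f t θ'
      = (1 / (T:ℝ)) * ∑ t ∈ Finset.range T, (f t (θs t) - f t θ') := by
    rw [Finset.sum_sub_distrib, mul_sub]
  rw [hfin]
  have hx : (0:ℝ) ≤ BΘ * Bg * s := by positivity
  calc (1 / (T:ℝ)) * ∑ t ∈ Finset.range T, (f t (θs t) - f t θ')
      ≤ (1 / (T:ℝ)) * (BΘ * Bg * s) := by
        apply mul_le_mul_of_nonneg_left _ (by positivity)
        linarith
    _ = BΘ * Bg * (s / T) := by ring
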